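/- Danskin's theorem: Let A ⊆ ℝ^m be a nonempty compact set and let φ : ℝ^n × ℝ^m → ℝ be continuous, such that for every a ∈ A the map x ↦ φ(x,a) is differentiable and the gradient map (x,a) ↦ ∇_x φ(x,a) is continuous on ℝ^n × A. Then Φ(x) = max_{a ∈ A} φ(x,a) is directionally differentiable at every x ∈ ℝ^n in every direction d ∈ ℝ^n, and its one-sided directional derivative satisfies Φ'(x; d) = max_{a ∈ A*(x)} ⟨d, ∇_x φ(x,a)⟩, where A*(x) = {a ∈ A : φ(x,a) = Φ(x)} is the set of maximizers. -/

import Mathlib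

open Filter Set

/-- Danskin's theorem: for a nonempty compact `A ⊆ ℝ^m` and a continuous
`φ : ℝ^n × ℝ^m → ℝ` such that `x ↦ φ(x,a)` is differentiable for every `a ∈ A` and
`(x,a) ↦ ∇ₓφ(x,a)` is continuous on `ℝ^n × A`, the function `Φ(x) = max_{a ∈ A} φ(x,a)`
is directionally differentiable at every `x` in every direction `d`, with one-sided
directional derivative `Φ'(x;d) = max_{a ∈ A*(x)} ⟨d, ∇ₓφ(x,a)⟩`, where
`A*(x) = {a ∈ A : φ(x,a) = Φ(x)}`. -/
theorem danskin {n m : ℕ}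
    (A : Set (EuclideanSpace ℝ (Fin m))) (hA : A.Nonempty) (hAc : IsCompact A)
    (φ : EuclideanSpace ℝ (Fin n) → EuclideanSpace ℝ (Fin m) → ℝ)
    (hφ : Continuous fun p : EuclideanSpace ℝ (Fin n) × EuclideanSpace ℝ (Fin m) =>
      φ p.1 p.2)
    (hdiff : ∀ a ∈ A, Differentiable ℝ fun x => φ x a)
    (hgrad : ContinuousOn
      (fun p : EuclideanSpace ℝ (Fin n) × EuclideanSpace ℝ (Fin m) =>
        gradient (fun x => φ x p.2) p.1)
      (Set.univ ×ˢ A))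
    (x d : EuclideanSpace ℝ (Fin n)) :
    Tendsto
      (fun t : ℝ =>
        (sSup ((fun a => φ (x + t • d) a) '' A) - sSup ((fun a => φ x a) '' A)) / t)
      (nhdsWithin 0 (Set.Ioi 0))
      (nhds (sSup ((fun a => (inner ℝ d (gradient (fun x' => φ x' a) x) : ℝ)) ''
        {a ∈ A | φ x a = sSup ((fun a' => φ x a') '' A)}))) := by
  classical
  set Φ : EuclideanSpace ℝ (Fin n) → ℝ := fun y => sSup ((fun a => φ y a) '' A) with hΦdef
  set G : EuclideanSpace ℝ (Fin n) × EuclideanSpace ℝ (Fin m) → ℝ :=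
    fun p => (inner ℝ d (gradient (fun x' => φ x' p.2) p.1) : ℝ) with hGdef
  set g : EuclideanSpace ℝ (Fin m) → ℝ :=
    fun a => (inner ℝ d (gradient (fun x' => φ x' a) x) : ℝ) with hgdef
  set S : Set (EuclideanSpace ℝ (Fin m)) := {a ∈ A | φ x a = Φ x} with hSdef
  set M : ℝ := sSup (g '' S) with hMdef
  show Tendsto (fun t : ℝ => (Φ (x + t • d) - Φ x) / t) (nhdsWithin 0 (Set.Ioi 0)) (nhds M)
  -- continuity of φ y · for each y
  have hφy : ∀ y, Continuous (fun a => φ y a) := fun y => hφ.comp (Continuous.prodMk_right y)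
  -- each value is at most Φ y
  have hle : ∀ y, ∀ a ∈ A, φ y a ≤ Φ y := by
    intro y a ha
    exact le_csSup (hAc.image_of_continuousOn (hφy y).continuousOn).bddAbove
      (mem_image_of_mem _ ha)
  -- maximizers exist and give the sup
  have hmax : ∀ y, ∃ a ∈ A, IsMaxOn (fun a => φ y a) A a := fun y =>
    hAc.exists_isMaxOn hA (hφy y).continuousOn
  have hΦeq : ∀ y, ∀ a ∈ A, IsMaxOn (fun a => φ y a) A a → Φ y = φ y a := by
    intro y a ha hmaxa
    refine IsGreatest.csSup_eq ⟨mem_image_of_mem _ ha, ?_⟩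
    rintro _ ⟨b, hb, rfl⟩
    exact hmaxa hb
  -- S is nonempty and compact
  have hSsub : S ⊆ A := fun a ha => ha.1
  have hSne : S.Nonempty := by
    obtain ⟨a₀, ha₀, hmax₀⟩ := hmax x
    exact ⟨a₀, ha₀, (hΦeq x a₀ ha₀ hmax₀).symm⟩
  have hSc : IsCompact S := by
    have hcl : IsClosed ((fun a => φ x a) ⁻¹' {Φ x}) := isClosed_singleton.preimage (hφy x)
    have heq : S = A ∩ (fun a => φ x a) ⁻¹' {Φ x} := by
      ext a; simp [hSdef]
    rw [heq]
    exact hAc.inter_right hcl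
  -- continuity of G, g
  have hGc : ContinuousOn G (Set.univ ×ˢ A) := continuousOn_const.inner hgrad
  have hgA : ContinuousOn g A := by
    have h1 : ContinuousOn (fun a : EuclideanSpace ℝ (Fin m) =>
        G (x, a)) A := by
      apply hGc.comp (Continuous.prodMk_right x).continuousOn
      exact fun a ha => ⟨mem_univ _, ha⟩
    simpa [hGdef, hgdef] using h1
  -- the max of g over S is attained
  obtain ⟨astar, hastarS, hastarmax⟩ := hSc.exists_isMaxOn hSne (hgA.mono hSsub)
  have hMval : M = g astar :=
    IsGreatest.csSup_eq ⟨mem_image_of_mem _ hastarS, by rintro _ ⟨b, hb, rfl⟩; exact hastarmax hb⟩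
  -- derivative of t ↦ φ (x + t • d) a
  have hderiv : ∀ a ∈ A, ∀ s : ℝ,
      HasDerivAt (fun t : ℝ => φ (x + t • d) a) (G (x + s • d, a)) s := by
    intro a ha s
    have hline : HasDerivAt (fun t : ℝ => x + t • d) d s := by
      simpa using ((hasDerivAt_id s).smul_const d).const_add x
    have hgr : HasGradientAt (fun y => φ y a)
        (gradient (fun y => φ y a) (x + s • d)) (x + s • d) :=
      ((hdiff a ha) (x + s • d)).hasGradientAt
    have hf := (hasGradientAt_iff_hasFDerivAt.1 hgr).comp_hasDerivAt s hline
    rw [InnerProductSpace.toDual_apply_apply] at hf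
    have hcomm : (inner ℝ (gradient (fun y => φ y a) (x + s • d)) d : ℝ)
        = G (x + s • d, a) := real_inner_comm _ _
    rw [hcomm] at hf
    exact hf
  -- mean value theorem
  have hmvt : ∀ a ∈ A, ∀ t : ℝ, 0 < t → ∃ c ∈ Ioo 0 t,
      φ (x + t • d) a - φ x a = t * G (x + c • d, a) := by
    intro a ha t ht
    obtain ⟨c, hc, hceq⟩ := exists_hasDerivAt_eq_slope (fun s => φ (x + s • d) a)
      (fun s => G (x + s • d, a)) ht
      (fun s _ => (hderiv a ha s).continuousAt.continuousWithinAt)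
      (fun s hs => hderiv a ha s)
    refine ⟨c, hc, ?_⟩
    have h0 : φ (x + (0:ℝ) • d) a = φ x a := by simp
    rw [h0, sub_zero] at hceq
    field_simp [ht.ne'] at hceq
    linarith [hceq]
  rw [tendsto_order]
  constructor
  · -- lower bound
    intro b hb
    have h0 := hderiv astar (hSsub hastarS) 0
    have h0' : G (x + (0:ℝ) • d, astar) = M := by
      rw [hMval]; simp [hGdef, hgdef]
    rw [h0', hasDerivAt_iff_tendsto_slope] at h0
    have h0'' : Tendsto (slope (fun t : ℝ => φ (x + t • d) astar) 0)
        (nhdsWithin 0 (Set.Ioi 0)) (nhds M) :=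
      h0.mono_left (nhdsWithin_mono _ (fun t ht => ne_of_gt ht))
    filter_upwards [h0''.eventually (eventually_gt_nhds hb), self_mem_nhdsWithin]
      with t hslope (ht : t ∈ Ioi 0)
    have hslope' : slope (fun t : ℝ => φ (x + t • d) astar) 0 t
        = (φ (x + t • d) astar - φ x astar) / t := by
      simp [slope_def_field]
    rw [hslope'] at hslope
    refine lt_of_lt_of_le hslope ?_
    have h1 : φ x astar = Φ x := hastarS.2
    have h2 : φ (x + t • d) astar ≤ Φ (x + t • d) := hle _ astar (hSsub hastarS)
    rw [← h1]
    exact (div_le_div_iff_of_pos_right ht).mpr (sub_le_sub_right h2 _)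
  · -- upper bound
    intro b hb
    set ε : ℝ := (b - M) / 2 with hεdef
    have hε : 0 < ε := by rw [hεdef]; linarith
    -- the "bad" set C
    set C : Set (EuclideanSpace ℝ (Fin m)) := {a ∈ A | M + ε ≤ g a} with hCdef
    have hCsub : C ⊆ A := fun a ha => ha.1
    have hCc : IsCompact C := by
      have hcl : IsClosed (A ∩ g ⁻¹' (Ici (M + ε))) :=
        hgA.preimage_isClosed_of_isClosed hAc.isClosed isClosed_Ici
      have heq : C = A ∩ g ⁻¹' (Ici (M + ε)) := by
        ext a; simp [hCdef]
      rw [heq]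
      exact IsCompact.of_isClosed_subset hAc hcl inter_subset_left
    have hCS : ∀ a ∈ C, φ x a < Φ x := by
      intro a ha
      rcases lt_or_eq_of_le (hle x a ha.1) with h | h
      · exact h
      · exfalso
        have haS : a ∈ S := ⟨ha.1, h⟩
        have : g a ≤ M :=
          le_csSup ((hSc.image_of_continuousOn (hgA.mono hSsub)).bddAbove)
            (mem_image_of_mem _ haS)
        linarith [ha.2]
    -- key claim: maximizers near x avoid C
    have hkey : ∃ δ₁ > 0, ∀ y, dist y x < δ₁ →
        ∀ a ∈ A, IsMaxOn (fun a => φ y a) A a → g a < M + ε := by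
      rcases eq_empty_or_nonempty C with hC | hC
      · refine ⟨1, one_pos, fun y _ a ha _ => ?_⟩
        by_contra hcon
        push_neg at hcon
        have hmem : a ∈ C := ⟨ha, hcon⟩
        rw [hC] at hmem
        exact hmem
      · obtain ⟨c₀, hc₀C, hc₀max⟩ := hCc.exists_isMaxOn hC ((hφy x).continuousOn.mono hCsub)
        set η : ℝ := Φ x - φ x c₀ with hηdef
        have hη : 0 < η := by have := hCS c₀ hc₀C; rw [hηdef]; linarith
        -- uniform continuity of φ on closedBall x 1 ×ˢ A
        have hK : IsCompact ((Metric.closedBall x 1) ×ˢ A) :=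
          (isCompact_closedBall x 1).prod hAc
        have huc := hK.uniformContinuousOn_of_continuous hφ.continuousOn
        rw [Metric.uniformContinuousOn_iff] at huc
        obtain ⟨δ₀, hδ₀, hδ₀prop⟩ := huc (η / 3) (by linarith)
        refine ⟨min δ₀ 1, lt_min hδ₀ one_pos, fun y hy a ha hamax => ?_⟩
        by_contra hcon
        push_neg at hcon
        have haC : a ∈ C := ⟨ha, hcon⟩
        have hyball : y ∈ Metric.closedBall x 1 :=
          Metric.mem_closedBall.2 (le_of_lt (lt_of_lt_of_le hy (min_le_right _ _)))
        have hxball : x ∈ Metric.closedBall x 1 := Metric.mem_closedBall_self zero_le_one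
        have hclose : ∀ a' ∈ A, dist (φ y a') (φ x a') < η / 3 := by
          intro a' ha'
          have hdd : dist ((y, a') : EuclideanSpace ℝ (Fin n) × EuclideanSpace ℝ (Fin m))
              (x, a') = dist y x := by
            simp [Prod.dist_eq, dist_nonneg]
          have := hδ₀prop (y, a') ⟨hyball, ha'⟩ (x, a') ⟨hxball, ha'⟩
            (by rw [hdd]; exact lt_of_lt_of_le hy (min_le_left _ _))
          exact this
        have h1 : φ y a < φ x a + η / 3 := by
          have := hclose a ha
          rw [Real.dist_eq, abs_sub_lt_iff] at this
          linarith [this.1]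
        have h2 : φ x a ≤ φ x c₀ := hc₀max haC
        have h3 : φ x astar - η / 3 < φ y astar := by
          have := hclose astar (hSsub hastarS)
          rw [Real.dist_eq, abs_sub_lt_iff] at this
          linarith [this.2]
        have h4 : φ y astar ≤ φ y a := hamax (hSsub hastarS)
        have h5 : φ x astar = Φ x := hastarS.2
        have : Φ x - η / 3 < Φ x - η + η / 3 := by
          calc Φ x - η / 3 = φ x astar - η / 3 := by rw [h5]
            _ < φ y astar := h3
            _ ≤ φ y a := h4
            _ < φ x a + η / 3 := h1
            _ ≤ φ x c₀ + η / 3 := by linarith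
            _ = Φ x - η + η / 3 := by rw [hηdef]; ring
        linarith
    obtain ⟨δ₁, hδ₁, hδ₁prop⟩ := hkey
    -- uniform continuity of G on closedBall x 1 ×ˢ A
    have hK : IsCompact ((Metric.closedBall x 1) ×ˢ A) :=
      (isCompact_closedBall x 1).prod hAc
    have hucG := hK.uniformContinuousOn_of_continuous
      (hGc.mono (prod_mono (subset_univ _) subset_rfl))
    rw [Metric.uniformContinuousOn_iff] at hucG
    obtain ⟨δ₂, hδ₂, hδ₂prop⟩ := hucG ε hε
    -- choose δ₃
    set r : ℝ := min δ₁ (min δ₂ 1) with hrdef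
    have hr : 0 < r := lt_min hδ₁ (lt_min hδ₂ one_pos)
    set δ₃ : ℝ := r / (‖d‖ + 1) with hδ₃def
    have hd1 : (0:ℝ) < ‖d‖ + 1 := by positivity
    have hδ₃ : 0 < δ₃ := div_pos hr hd1
    filter_upwards [Ioo_mem_nhdsGT_of_mem (⟨le_refl (0:ℝ), hδ₃⟩ : (0:ℝ) ∈ Ico 0 δ₃)]
      with t ht
    obtain ⟨ht0, htδ⟩ := ht
    have hdist : ∀ s : ℝ, 0 ≤ s → s ≤ t → dist (x + s • d) x < r := by
      intro s hs0 hst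
      rw [dist_self_add_left, norm_smul, Real.norm_eq_abs, abs_of_nonneg hs0]
      calc s * ‖d‖ ≤ t * ‖d‖ := by gcongr
        _ ≤ t * (‖d‖ + 1) := by nlinarith [norm_nonneg d, ht0]
        _ < δ₃ * (‖d‖ + 1) := by gcongr
        _ = r := by rw [hδ₃def]; field_simp
    -- maximizer at x + t • d
    obtain ⟨at', hat'A, hat'max⟩ := hmax (x + t • d)
    have hΦt : Φ (x + t • d) = φ (x + t • d) at' := hΦeq _ at' hat'A hat'max
    have hgat' : g at' < M + ε := by
      refine hδ₁prop (x + t • d) ?_ at' hat'A hat'max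
      exact lt_of_lt_of_le (hdist t ht0.le le_rfl) (le_trans (min_le_left _ _) le_rfl)
    obtain ⟨c, hc, hmvtc⟩ := hmvt at' hat'A t ht0
    have hcball : x + c • d ∈ Metric.closedBall x 1 := by
      apply Metric.mem_closedBall.2
      have := hdist c hc.1.le hc.2.le
      have hr1 : r ≤ 1 := le_trans (min_le_right _ _) (min_le_right _ _)
      linarith
    have hxball : x ∈ Metric.closedBall x 1 := Metric.mem_closedBall_self zero_le_one
    have hGclose : dist (G (x + c • d, at')) (G (x, at')) < ε := by
      apply hδ₂prop (x + c • d, at') ⟨hcball, hat'A⟩ (x, at') ⟨hxball, hat'A⟩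
      have hdd : dist ((x + c • d, at') : EuclideanSpace ℝ (Fin n) × EuclideanSpace ℝ (Fin m))
          (x, at') = dist (x + c • d) x := by
        simp [Prod.dist_eq, dist_nonneg]
      rw [hdd]
      exact lt_of_lt_of_le (hdist c hc.1.le hc.2.le)
        (le_trans (min_le_right _ _) (min_le_left _ _))
    have hGxat' : G (x, at') = g at' := by simp [hGdef, hgdef]
    have hGbound : G (x + c • d, at') < M + 2 * ε := by
      rw [Real.dist_eq, abs_sub_lt_iff] at hGclose
      rw [hGxat'] at hGclose
      linarith [hGclose.1]
    have hb2 : M + 2 * ε = b := by rw [hεdef]; ring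
    calc (Φ (x + t • d) - Φ x) / t ≤ (φ (x + t • d) at' - φ x at') / t := by
          rw [hΦt]
          exact (div_le_div_iff_of_pos_right ht0).mpr (by linarith [hle x at' hat'A])
      _ = G (x + c • d, at') := by rw [hmvtc]; field_simp
      _ < M + 2 * ε := hGbound
      _ = b := hb2
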